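/- Let (P,≻,q) be a problem and k > 1. Every manipulating student of the constrained Gale-Shapley mechanism GS^k at (P,≻,q) is a blocking student for the matching GS^k(P,≻,q) under (P,≻,q). -/

import Mathlib

/-!
School choice framework following Bonkoungou–Nesterov,
"Reforms meet fairness concerns in school and college admissions".

Students `I` and schools `S` are finite types with `|I| > |S|`.
A strict preference relation of a student over `S ∪ {∅}` is represented by a list
of `Option S` containing every element exactly once (earlier = more preferred);
`none` is the outside option.  A strict priority order of a school is a list of
`I` containing every student exactly once (earlier = higher priority).
-/

namespace SchoolChoice

variable {I S : Type*} [Fintype I] [DecidableEq I] [Fintype S] [DecidableEq S]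

/-- `p` is a strict preference relation on `S ∪ {∅}`: a ranking list containing every
element of `Option S` exactly once. -/
def ValidPref (p : List (Option S)) : Prop := p.Nodup ∧ ∀ x : Option S, x ∈ p

/-- `pr` is a strict priority order: a ranking list containing every student exactly once. -/
def ValidPrio (pr : List I) : Prop := pr.Nodup ∧ ∀ i : I, i ∈ pr

/-- `a` is strictly preferred to `b` under the preference relation `p`. -/
def prefLt (p : List (Option S)) (a b : Option S) : Prop := p.idxOf a < p.idxOf b

/-- `i` has strictly higher priority than `j` under the priority order `pr`. -/
def prioLt (pr : List I) (i j : I) : Prop := pr.idxOf i < pr.idxOf j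

instance (p : List (Option S)) (a b : Option S) : Decidable (prefLt p a b) :=
  inferInstanceAs (Decidable (_ < _))

instance (pr : List I) (i j : I) : Decidable (prioLt pr i j) :=
  inferInstanceAs (Decidable (_ < _))

/-- The acceptable schools of `p` (those preferred to the outside option), in preference
order. -/
def acceptables (p : List (Option S)) : List S := (p.takeWhile Option.isSome).filterMap id

/-- The truncation of `p` after its `k`-th acceptable school: the preference relation
listing, in the same order, only the `min k _` most-preferred acceptable schools of `p`,
all other schools being unacceptable (kept below `none` in their original order). -/
def truncate (p : List (Option S)) (k : ℕ) : List (Option S) :=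
  ((acceptables p).take k).map some ++
    none :: p.filter (fun x => decide (x ≠ none ∧ x ∉ ((acceptables p).take k).map some))

/-- `μ` is a matching: it respects the capacities `q`. -/
def IsMatching (q : S → ℕ) (μ : I → Option S) : Prop :=
  ∀ s : S, (Finset.univ.filter (fun i => μ i = some s)).card ≤ q s

/-- The pair `(i, s)` blocks `μ` under the problem `(P, prio, q)`. -/
def Blocks (P : I → List (Option S)) (prio : S → List I) (q : S → ℕ)
    (μ : I → Option S) (i : I) (s : S) : Prop :=
  prefLt (P i) (some s) (μ i) ∧
    ((Finset.univ.filter (fun j => μ j = some s)).card < q s ∨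
      ∃ j : I, μ j = some s ∧ prioLt (prio s) i j)

/-- `i` is a blocking student for `μ` under `(P, prio, q)`. -/
def BlockingStudent (P : I → List (Option S)) (prio : S → List I) (q : S → ℕ)
    (μ : I → Option S) (i : I) : Prop :=
  ∃ s : S, Blocks P prio q μ i s

/-- `μ` is individually rational under `P`. -/
def IndividuallyRational (P : I → List (Option S)) (μ : I → Option S) : Prop :=
  ∀ i : I, ¬ prefLt (P i) none (μ i)

/-- `μ` is stable at `(P, prio, q)`. -/
def IsStable (P : I → List (Option S)) (prio : S → List I) (q : S → ℕ)
    (μ : I → Option S) : Prop :=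
  IndividuallyRational P μ ∧ ∀ i : I, ¬ BlockingStudent P prio q μ i

/-- The number of blocking students for `μ` under `(P, prio, q)`. -/
noncomputable def numBlocking (P : I → List (Option S)) (prio : S → List I) (q : S → ℕ)
    (μ : I → Option S) : ℕ :=
  {i : I | BlockingStudent P prio q μ i}.ncard

/-! ### The Gale–Shapley student-proposing deferred acceptance mechanism

The state `σ : I → ℕ` records, for each student, how many of her acceptable schools
have already rejected her; she currently applies to the `σ i`-th school on her list
(if any).  At each round every school tentatively keeps the `q s` highest-priority
students among its current applicants and rejects the rest, who move on. -/

/-- The school student `i` currently applies to. -/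
def daTarget (P : I → List (Option S)) (σ : I → ℕ) (i : I) : Option S :=
  (acceptables (P i))[σ i]?

/-- The students tentatively held by school `s`: the `q s` highest-priority current
applicants. -/
def daHeld (P : I → List (Option S)) (prio : S → List I) (q : S → ℕ)
    (σ : I → ℕ) (s : S) : List I :=
  ((prio s).filter (fun i => decide (daTarget P σ i = some s))).take (q s)

/-- One round of deferred acceptance: every rejected student moves to her next choice. -/
def daStep (P : I → List (Option S)) (prio : S → List I) (q : S → ℕ)
    (σ : I → ℕ) : I → ℕ := fun i =>
  match daTarget P σ i with
  | none => σ i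
  | some s => if i ∈ daHeld P prio q σ s then σ i else σ i + 1

/-- The Gale–Shapley (student-proposing deferred acceptance) mechanism.  Iterating the
round map `|I| * |S| + 1` times is guaranteed to reach the terminal state. -/
def GS (P : I → List (Option S)) (prio : S → List I) (q : S → ℕ) : I → Option S :=
  fun i =>
    let σ := (daStep P prio q)^[Fintype.card I * Fintype.card S + 1] (fun _ => 0)
    match daTarget P σ i with
    | none => none
    | some s => if i ∈ daHeld P prio q σ s then some s else none

/-- The constrained Gale–Shapley mechanism `GS^k`. -/
def GSk (k : ℕ) (P : I → List (Option S)) (prio : S → List I) (q : S → ℕ) : I → Option S :=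
  GS (fun i => truncate (P i) k) prio q

/-! ### The Boston (immediate acceptance) mechanism -/

/-- Round `t` of the Boston mechanism: each not-yet-accepted student applies to her
`t`-th ranked acceptable school (0-indexed), and each school permanently accepts, up to
its remaining capacity, its highest-priority new applicants. -/
def bostonRound (P : I → List (Option S)) (prio : S → List I) (q : S → ℕ)
    (μ : I → Option S) (t : ℕ) : I → Option S := fun i =>
  match μ i with
  | some s => some s
  | none =>
    match (acceptables (P i))[t]? with
    | none => none
    | some s =>
      if i ∈ ((prio s).filter
            (fun j => decide (μ j = none ∧ (acceptables (P j))[t]? = some s))).take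
          (q s - (Finset.univ.filter (fun j => μ j = some s)).card)
      then some s else none

/-- The Boston (immediate acceptance) mechanism. -/
def Boston (P : I → List (Option S)) (prio : S → List I) (q : S → ℕ) : I → Option S :=
  (List.range (Fintype.card S)).foldl (bostonRound P prio q) (fun _ => none)

/-- The constrained Boston mechanism `β^k`. -/
def Bostonk (k : ℕ) (P : I → List (Option S)) (prio : S → List I) (q : S → ℕ) :
    I → Option S :=
  Boston (fun i => truncate (P i) k) prio q

/-! ### The first-preference-first mechanism -/

/-- The adjusted priority profile: each first-preference-first school (member of `fpf`)
ranks students first by the rank they assign to it under `P` (counting the ranking of the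
outside option as well), ties broken by the original priority; equal-preference schools
keep their original priority. -/
def fpfPrio (fpf : Finset S) (P : I → List (Option S)) (prio : S → List I) : S → List I :=
  fun s =>
    if s ∈ fpf then
      (List.range (Fintype.card S + 1)).flatMap
        (fun r => (prio s).filter (fun i => decide ((P i).idxOf (some s) = r)))
    else prio s

/-- The first-preference-first mechanism with set `fpf` of first-preference-first
schools: Gale–Shapley run on the adjusted priorities. -/
def FPF (fpf : Finset S) (P : I → List (Option S)) (prio : S → List I) (q : S → ℕ) :
    I → Option S :=
  GS P (fpfPrio fpf P prio) q

/-- The constrained first-preference-first mechanism `FPF^k`. -/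
def FPFk (fpf : Finset S) (k : ℕ) (P : I → List (Option S)) (prio : S → List I)
    (q : S → ℕ) : I → Option S :=
  FPF fpf (fun i => truncate (P i) k) prio q

/-! ### Manipulation and equilibrium notions -/

/-- Student `i` is a manipulating student of the mechanism `φ` (with priorities and
capacities fixed) at the true profile `P`. -/
def ManipulatingStudent (φ : (I → List (Option S)) → I → Option S)
    (P : I → List (Option S)) (i : I) : Prop :=
  ∃ Q : List (Option S), ValidPref Q ∧
    prefLt (P i) (φ (Function.update P i Q) i) (φ P i)

/-- The mechanism `φ` is not manipulable at `P`. -/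
def NotManipulable (φ : (I → List (Option S)) → I → Option S)
    (P : I → List (Option S)) : Prop :=
  ∀ i : I, ¬ ManipulatingStudent φ P i

/-- `P'` is a Nash equilibrium of the game `(φ, P)` in which the sophisticated students
are the members of `M` (who may misreport, and best respond) and all other (sincere)
students report truthfully. -/
def NashEq (φ : (I → List (Option S)) → I → Option S) (P : I → List (Option S))
    (M : Finset I) (P' : I → List (Option S)) : Prop :=
  (∀ i, ValidPref (P' i)) ∧ (∀ i ∉ M, P' i = P i) ∧
    ∀ i ∈ M, ∀ Q : List (Option S), ValidPref Q →
      ¬ prefLt (P i) (φ (Function.update P' i Q) i) (φ P' i)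

/-! ### Semi-sophisticated students -/

/-- Student `i` is guaranteed her first choice `s`: `s` is her most-preferred acceptable
school and `i` is among the `q s` highest-priority students at `s`. -/
def GuaranteedFirstChoice (P : I → List (Option S)) (prio : S → List I) (q : S → ℕ)
    (i : I) (s : S) : Prop :=
  (acceptables (P i)).head? = some s ∧ (prio s).idxOf i < q s

instance (P : I → List (Option S)) (prio : S → List I) (q : S → ℕ) (i : I) (s : S) :
    Decidable (GuaranteedFirstChoice P prio q i s) :=
  inferInstanceAs (Decidable (_ ∧ _))

/-- School `s` is competitive: at least `q s` students are guaranteed their first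
choice `s`. -/
def Competitive (P : I → List (Option S)) (prio : S → List I) (q : S → ℕ) (s : S) : Prop :=
  q s ≤ (Finset.univ.filter (fun i => GuaranteedFirstChoice P prio q i s)).card

instance (P : I → List (Option S)) (prio : S → List I) (q : S → ℕ) (s : S) :
    Decidable (Competitive P prio q s) :=
  inferInstanceAs (Decidable (_ ≤ _))

/-- `P'` is a Nash equilibrium of the game `(GS^ℓ, P)` with semi-sophisticated students:
every student guaranteed her first choice reports truthfully; every other student reports
truthfully if she has at most `ℓ` acceptable schools or all her acceptable schools are
competitive, and otherwise lists as acceptable, in the order given by her true preference,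
only her acceptable schools that are not competitive. -/
def SemiSophProfile (ℓ : ℕ) (P : I → List (Option S)) (prio : S → List I) (q : S → ℕ)
    (P' : I → List (Option S)) : Prop :=
  ∀ i : I,
    ((∃ s : S, GuaranteedFirstChoice P prio q i s) → P' i = P i) ∧
    (¬ (∃ s : S, GuaranteedFirstChoice P prio q i s) →
      (((acceptables (P i)).length ≤ ℓ ∨ ∀ s ∈ acceptables (P i), Competitive P prio q s) →
          P' i = P i) ∧
      (¬ ((acceptables (P i)).length ≤ ℓ ∨
            ∀ s ∈ acceptables (P i), Competitive P prio q s) →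
          acceptables (P' i) =
            (acceptables (P i)).filter (fun s => decide (¬ Competitive P prio q s))))

/-! ### Auxiliary list lemmas -/

section AuxList

variable {α : Type*} [DecidableEq α]

lemma sublist_indexOf_lt {l' l : List α} (h : List.Sublist l' l) (hnd : l.Nodup) :
    ∀ {a b : α}, a ∈ l' → b ∈ l' → l'.idxOf a < l'.idxOf b → l.idxOf a < l.idxOf b := by
  induction h with
  | slnil => intro a b ha _ _; simp at ha
  | cons x h ih =>
    rename_i l₁ l₂
    intro a b ha hb hlt
    have hx : x ∉ l₂ := (List.nodup_cons.1 hnd).1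
    have ha2 : a ∈ l₂ := h.subset ha
    have hb2 : b ∈ l₂ := h.subset hb
    have hax : x ≠ a := fun e => hx (e ▸ ha2)
    have hbx : x ≠ b := fun e => hx (e ▸ hb2)
    rw [List.idxOf_cons_ne _ hax, List.idxOf_cons_ne _ hbx]
    exact Nat.succ_lt_succ (ih ha hb hlt (hnd := (List.nodup_cons.1 hnd).2))
  | cons_cons x h ih =>
    rename_i l₁ l₂
    intro a b ha hb hlt
    have hx : x ∉ l₂ := (List.nodup_cons.1 hnd).1
    by_cases hbx : x = b
    · subst hbx
      rw [List.idxOf_cons_self] at hlt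
      omega
    · by_cases hax : x = a
      · subst hax
        rw [List.idxOf_cons_self, List.idxOf_cons_ne _ hbx]
        omega
      · have ha1 : a ∈ l₁ := by
          rcases List.mem_cons.1 ha with h1 | h1
          · exact absurd h1.symm hax
          · exact h1
        have hb1 : b ∈ l₁ := by
          rcases List.mem_cons.1 hb with h1 | h1
          · exact absurd h1.symm hbx
          · exact h1
        rw [List.idxOf_cons_ne _ hax, List.idxOf_cons_ne _ hbx] at hlt ⊢
        exact Nat.succ_lt_succ (ih ha1 hb1 (Nat.lt_of_succ_lt_succ hlt)
          (hnd := (List.nodup_cons.1 hnd).2))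

lemma sublist_indexOf_lt_iff {l' l : List α} (h : List.Sublist l' l) (hnd : l.Nodup)
    {a b : α} (ha : a ∈ l') (hb : b ∈ l') :
    l'.idxOf a < l'.idxOf b ↔ l.idxOf a < l.idxOf b := by
  constructor
  · exact sublist_indexOf_lt h hnd ha hb
  · intro hlt
    rcases Nat.lt_trichotomy (l'.idxOf a) (l'.idxOf b) with h1 | h1 | h1
    · exact h1
    · exact absurd (List.idxOf_inj ha |>.1 h1) (by rintro rfl; exact Nat.lt_irrefl _ hlt)
    · exact absurd (sublist_indexOf_lt h hnd hb ha h1) (Nat.lt_asymm hlt)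

lemma mem_take_iff_indexOf_lt {l : List α} (hnd : l.Nodup) {x : α} {n : ℕ} :
    x ∈ l.take n ↔ x ∈ l ∧ l.idxOf x < n := by
  constructor
  · intro hx
    obtain ⟨m, hm, hget⟩ := List.getElem_of_mem hx
    have hmn : m < n := by
      have := hm; simp only [List.length_take] at this; omega
    have hml : m < l.length := by
      have := hm; simp only [List.length_take] at this; omega
    have : l[m] = x := by rw [List.getElem_take] at hget; exact hget
    refine ⟨this ▸ List.getElem_mem hml, ?_⟩
    rw [← this, List.Nodup.idxOf_getElem hnd]
    exact hmn
  · rintro ⟨hx, hlt⟩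
    have hl : l.idxOf x < l.length := List.idxOf_lt_length_iff.2 hx
    have : (l.take n)[l.idxOf x]'(by simp [List.length_take]; omega) = x := by
      rw [List.getElem_take]
      exact List.getElem_idxOf hl
    exact this ▸ List.getElem_mem _

lemma length_le_of_nodup_subset {l₁ l₂ : List α} (h₁ : l₁.Nodup) (hsub : ∀ x ∈ l₁, x ∈ l₂) :
    l₁.length ≤ l₂.length := by
  calc l₁.length = l₁.toFinset.card := (List.toFinset_card_of_nodup h₁).symm
    _ ≤ l₂.toFinset.card := Finset.card_le_card (fun x hx => by
        simp only [List.mem_toFinset] at hx ⊢; exact hsub x hx)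
    _ ≤ l₂.length := l₂.toFinset_card_le

end AuxList

/-! ### Preference list lemmas -/

section PrefBasics

variable {S : Type*} [DecidableEq S]

theorem optBEq : (Option.instBEq : BEq (Option S)) = instBEqOfDecidableEq := by
  refine congrArg BEq.mk ?_
  funext a b
  cases a <;> cases b <;> simp [(· == ·)] <;> rfl

lemma map_some_filterMap_id (l : List (Option S)) (h : ∀ x ∈ l, x.isSome) :
    (l.filterMap id).map some = l := by
  induction l with
  | nil => simp
  | cons x t ih =>
    cases x with
    | none => simpa using h none (by simp)
    | some a =>
      have : (t.filterMap id).map some = t := ih (fun x hx => h x (by simp [hx]))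
      simp [List.filterMap_cons]
      exact this

lemma takeWhile_map_some_append (l : List S) (r : List (Option S)) :
    ((l.map some) ++ none :: r).takeWhile Option.isSome = l.map some := by
  induction l with
  | nil => simp [List.takeWhile_cons]
  | cons a t ih => simpa [List.takeWhile_cons] using ih

lemma acc_of_decomp (A : List S) (r : List (Option S)) :
    acceptables ((A.map some) ++ none :: r) = A := by
  unfold acceptables
  rw [takeWhile_map_some_append, List.filterMap_map]
  simpa using List.filterMap_some A

lemma dropWhile_head_none :
    ∀ {l : List (Option S)} {y : Option S} {r : List (Option S)},
      l.dropWhile Option.isSome = y :: r → y = none := by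
  intro l
  induction l with
  | nil => intro y r h; simp at h
  | cons x t ih =>
    intro y r h
    rw [List.dropWhile_cons] at h
    by_cases hx : Option.isSome x = true
    · rw [if_pos hx] at h; exact ih h
    · rw [if_neg hx] at h
      injection h with h1 h2
      subst h1
      cases x
      · rfl
      · simp at hx

lemma validPref_decomp {p : List (Option S)} (hp : ValidPref p) :
    ∃ r : List (Option S), p = (acceptables p).map some ++ none :: r := by
  have h1 : (acceptables p).map some = p.takeWhile Option.isSome :=
    map_some_filterMap_id _ (fun x hx => List.mem_takeWhile_imp hx)
  have hsplit : p = p.takeWhile Option.isSome ++ p.dropWhile Option.isSome :=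
    (List.takeWhile_append_dropWhile ..).symm
  have hne : p.dropWhile Option.isSome ≠ [] := by
    intro h0
    have hmem : (none : Option S) ∈ p := hp.2 none
    rw [hsplit, h0, List.append_nil] at hmem
    simpa using List.mem_takeWhile_imp hmem
  obtain ⟨y, r, hyr⟩ := List.exists_cons_of_ne_nil hne
  have hy : y = none := dropWhile_head_none hyr
  refine ⟨r, ?_⟩
  conv_lhs => rw [hsplit, hyr]
  rw [hy, ← h1]

variable {p : List (Option S)} {s t : S}

lemma acc_nodup (hp : ValidPref p) : (acceptables p).Nodup := by
  obtain ⟨r, hd⟩ := validPref_decomp hp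
  have h1 : p.Nodup := hp.1
  rw [hd] at h1
  exact (h1.of_append_left).of_map some

lemma indexOf_none_eq (hp : ValidPref p) : p.idxOf none = (acceptables p).length := by
  obtain ⟨r, hd⟩ := validPref_decomp hp
  conv_lhs => rw [hd]
  rw [List.idxOf_append_of_notMem (by simp), List.idxOf_cons_self]
  simp

lemma indexOf_map_some (l : List S) (s : S) : (l.map some).idxOf (some s) = l.idxOf s := by
  induction l with
  | nil => simp
  | cons a t ih =>
    by_cases h : a = s
    · subst h
      rw [List.map_cons, List.idxOf_cons_self, List.idxOf_cons_self]
    · rw [List.map_cons, List.idxOf_cons_ne _ (show (some a : Option S) ≠ some s by simp [h]),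
        List.idxOf_cons_ne _ (show a ≠ s from h), ih]

lemma indexOf_some_mem (hp : ValidPref p) (h : s ∈ acceptables p) :
    p.idxOf (some s) = (acceptables p).idxOf s := by
  obtain ⟨r, hd⟩ := validPref_decomp hp
  have := indexOf_map_some (acceptables p) s
  conv_lhs => rw [hd]
  rw [List.idxOf_append_of_mem (by simp [h])]
  exact this

lemma indexOf_none_lt_not_mem (hp : ValidPref p) (h : s ∉ acceptables p) :
    p.idxOf none < p.idxOf (some s) := by
  obtain ⟨r, hd⟩ := validPref_decomp hp
  have h0 := indexOf_none_eq hp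
  conv_rhs => rw [hd]
  rw [List.idxOf_append_of_notMem (by simp [h]),
    List.idxOf_cons_ne _ (show (none : Option S) ≠ some s by simp), h0]
  simp only [List.length_map]
  omega

lemma mem_acc_iff (hp : ValidPref p) :
    s ∈ acceptables p ↔ p.idxOf (some s) < p.idxOf none := by
  constructor
  · intro h
    rw [indexOf_some_mem hp h, indexOf_none_eq hp]
    exact List.idxOf_lt_length_iff.2 h
  · intro h
    by_contra hn
    exact Nat.lt_asymm h (indexOf_none_lt_not_mem hp hn)

lemma validPref_indexOf_inj (hp : ValidPref p) {a b : Option S}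
    (h : p.idxOf a = p.idxOf b) : a = b := by
  exact (List.idxOf_inj (hp.2 a)).1 h

lemma prefLt_some_none_iff (hp : ValidPref p) :
    prefLt p (some s) none ↔ s ∈ acceptables p := (mem_acc_iff hp).symm

lemma prefLt_some_some_iff (hp : ValidPref p) (hs : s ∈ acceptables p) (ht : t ∈ acceptables p) :
    prefLt p (some s) (some t) ↔
      (acceptables p).idxOf s < (acceptables p).idxOf t := by
  unfold prefLt
  rw [indexOf_some_mem hp hs, indexOf_some_mem hp ht]

lemma acc_truncate (p : List (Option S)) (k : ℕ) :
    acceptables (truncate p k) = (acceptables p).take k :=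
  acc_of_decomp _ _

lemma truncate_valid (hp : ValidPref p) (k : ℕ) : ValidPref (truncate p k) := by
  have hand : (acceptables p).Nodup := acc_nodup hp
  constructor
  · unfold truncate
    rw [List.nodup_append]
    refine ⟨(hand.sublist (List.take_sublist _ _)).map (Option.some_injective S), ?_, ?_⟩
    · rw [List.nodup_cons]
      constructor
      · intro hmem
        rw [List.mem_filter] at hmem
        simp at hmem
      · exact hp.1.filter _
    · intro x hx y hy hxy
      subst hxy
      rcases List.mem_cons.1 hy with h1 | h1
      · subst h1
        rcases List.mem_map.1 hx with ⟨u, _, hu⟩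
        exact nomatch hu
      · rw [List.mem_filter] at h1
        have := h1.2
        rw [decide_eq_true_iff] at this
        exact this.2 hx
  · intro x
    unfold truncate
    cases x with
    | none => exact List.mem_append_right _ (List.mem_cons_self)
    | some a =>
      by_cases hmem : some a ∈ ((acceptables p).take k).map some
      · exact List.mem_append_left _ hmem
      · refine List.mem_append_right _ (List.mem_cons_of_mem _ ?_)
        rw [List.mem_filter, decide_eq_true_iff]
        exact ⟨hp.2 _, by simp, hmem⟩

/-- A preference list declaring exactly one school `s'` acceptable. -/
noncomputable def mkSingle (s' : S) [Fintype S] : List (Option S) :=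
  some s' :: none :: (Finset.univ.erase s').toList.map some

lemma acc_mkSingle [Fintype S] (s' : S) : acceptables (mkSingle s') = [s'] := by
  have h : mkSingle s' =
      (([s'] : List S).map some) ++ none :: (Finset.univ.erase s').toList.map some := by
    simp [mkSingle]
  rw [h, acc_of_decomp]

lemma mkSingle_valid [Fintype S] (s' : S) : ValidPref (mkSingle s') := by
  constructor
  · unfold mkSingle
    rw [List.nodup_cons, List.nodup_cons]
    refine ⟨?_, ?_, ((Finset.univ.erase s').nodup_toList).map (Option.some_injective S)⟩
    · intro hmem
      rcases List.mem_cons.1 hmem with h1 | h1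
      · exact nomatch h1
      · rcases List.mem_map.1 h1 with ⟨x, hx, hxx⟩
        rw [Finset.mem_toList, Finset.mem_erase] at hx
        exact hx.1 (Option.some_injective S hxx)
    · intro hmem
      rcases List.mem_map.1 hmem with ⟨x, _, hxx⟩
      exact nomatch hxx
  · intro x
    cases x with
    | none => simp [mkSingle]
    | some a =>
      by_cases h : a = s'
      · subst h; simp [mkSingle]
      · unfold mkSingle
        refine List.mem_cons_of_mem _ (List.mem_cons_of_mem _ ?_)
        rw [List.mem_map]
        exact ⟨a, by rw [Finset.mem_toList, Finset.mem_erase]; exact ⟨h, Finset.mem_univ a⟩, rfl⟩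

end PrefBasics

/-! ### Deferred acceptance: run analysis -/

section GSRun

variable {I S : Type*} [Fintype I] [DecidableEq I] [Fintype S] [DecidableEq S]
variable (R : I → List (Option S)) (prio : S → List I) (q : S → ℕ)

/-- The state of the deferred-acceptance algorithm after `t` rounds. -/
def traj (t : ℕ) : I → ℕ := (daStep R prio q)^[t] (fun _ => 0)

/-- The number of rounds after which the algorithm has surely terminated. -/
abbrev nRounds (I S : Type*) [Fintype I] [Fintype S] : ℕ :=
  Fintype.card I * Fintype.card S + 1

lemma traj_zero (i : I) : traj R prio q 0 i = 0 := rfl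

lemma traj_succ (t : ℕ) : traj R prio q (t + 1) = daStep R prio q (traj R prio q t) := by
  unfold traj; rw [Function.iterate_succ_apply']

lemma daStep_of_none {σ : I → ℕ} {i : I} (h : daTarget R σ i = none) :
    daStep R prio q σ i = σ i := by
  unfold daStep; rw [h]

lemma daStep_of_held {σ : I → ℕ} {i : I} {s : S} (h : daTarget R σ i = some s)
    (hh : i ∈ daHeld R prio q σ s) : daStep R prio q σ i = σ i := by
  unfold daStep; rw [h]; simp [hh]

lemma daStep_of_rejected {σ : I → ℕ} {i : I} {s : S} (h : daTarget R σ i = some s)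
    (hh : i ∉ daHeld R prio q σ s) : daStep R prio q σ i = σ i + 1 := by
  unfold daStep; rw [h]; simp [hh]

lemma daStep_cases (σ : I → ℕ) (i : I) :
    daStep R prio q σ i = σ i ∨
      ∃ s, daTarget R σ i = some s ∧ i ∉ daHeld R prio q σ s ∧
        daStep R prio q σ i = σ i + 1 := by
  by_cases hn : daTarget R σ i = none
  · exact Or.inl (daStep_of_none R prio q hn)
  · obtain ⟨s, h⟩ := Option.ne_none_iff_exists'.1 hn
    by_cases hh : i ∈ daHeld R prio q σ s
    · exact Or.inl (daStep_of_held R prio q h hh)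
    · exact Or.inr ⟨s, h, hh, daStep_of_rejected R prio q h hh⟩

lemma le_daStep (σ : I → ℕ) (i : I) : σ i ≤ daStep R prio q σ i := by
  rcases daStep_cases R prio q σ i with h | ⟨s, _, _, h⟩ <;> omega

lemma daStep_le (σ : I → ℕ) (i : I) : daStep R prio q σ i ≤ σ i + 1 := by
  rcases daStep_cases R prio q σ i with h | ⟨s, _, _, h⟩ <;> omega

lemma traj_mono {t t' : ℕ} (h : t ≤ t') (i : I) : traj R prio q t i ≤ traj R prio q t' i := by
  have : Monotone (fun t => traj R prio q t i) := by
    apply monotone_nat_of_le_succ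
    intro n
    rw [traj_succ]
    exact le_daStep R prio q _ i
  exact this h

lemma daTarget_eq_some {σ : I → ℕ} {i : I} {s : S} :
    daTarget R σ i = some s ↔
      ∃ h : σ i < (acceptables (R i)).length, (acceptables (R i))[σ i] = s := by
  unfold daTarget
  exact List.getElem?_eq_some_iff

lemma traj_le_length (t : ℕ) (i : I) : traj R prio q t i ≤ (acceptables (R i)).length := by
  induction t with
  | zero => simp [traj_zero]
  | succ t ih =>
    rw [traj_succ]
    rcases daStep_cases R prio q (traj R prio q t) i with h | ⟨s, htar, _, h⟩
    · omega
    · obtain ⟨hlt, _⟩ := (daTarget_eq_some R).1 htar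
      omega

lemma daStep_fix_of_traj_eq {t m : ℕ} (h : daStep R prio q (traj R prio q t) = traj R prio q t) :
    traj R prio q (t + m) = traj R prio q t := by
  induction m with
  | zero => rfl
  | succ m ih => rw [show t + (m+1) = (t+m) + 1 by omega, traj_succ, ih, h]

/-- After `nRounds` rounds the algorithm has reached a fixed point. -/
lemma daStep_final (hR : ∀ i, ValidPref (R i)) :
    daStep R prio q (traj R prio q (nRounds I S)) = traj R prio q (nRounds I S) := by
  set M := Fintype.card I * Fintype.card S with hM
  have key : ∃ t, t ≤ M ∧ daStep R prio q (traj R prio q t) = traj R prio q t := by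
    by_contra hcon
    push_neg at hcon
    have hstrict : ∀ t, t ≤ M →
        (∑ j ∈ Finset.univ, traj R prio q t j) + 1 ≤ ∑ j ∈ Finset.univ, traj R prio q (t+1) j := by
      intro t ht
      have hne := hcon t ht
      have hpt : ∀ i, traj R prio q t i ≤ traj R prio q (t+1) i := fun i =>
        traj_mono R prio q (by omega) i
      have hex : ∃ i, traj R prio q t i < traj R prio q (t+1) i := by
        by_contra hall
        push_neg at hall
        apply hne
        funext i
        rw [← traj_succ]
        exact le_antisymm (hall i) (hpt i)
      obtain ⟨i, hi⟩ := hex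
      have := Finset.sum_lt_sum (fun j (_ : j ∈ Finset.univ) => hpt j) ⟨i, Finset.mem_univ i, hi⟩
      omega
    have hgrow : ∀ t, t ≤ M + 1 → t ≤ ∑ j ∈ Finset.univ, traj R prio q t j := by
      intro t
      induction t with
      | zero => omega
      | succ t ih =>
        intro ht
        have h1 := ih (by omega)
        have h2 := hstrict t (by omega)
        omega
    have hbound : (∑ j ∈ Finset.univ, traj R prio q (M+1) j) ≤ M := by
      calc (∑ j ∈ Finset.univ, traj R prio q (M+1) j)
          ≤ ∑ _j ∈ (Finset.univ : Finset I), Fintype.card S := by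
            apply Finset.sum_le_sum
            intro i _
            exact le_trans (traj_le_length R prio q (M+1) i)
              ((acc_nodup (hR i)).length_le_card)
        _ = Fintype.card I * Fintype.card S := by
            rw [Finset.sum_const, Finset.card_univ]; ring
    have := hgrow (M+1) (by omega)
    omega
  obtain ⟨t, ht, hfix⟩ := key
  have : traj R prio q (nRounds I S) = traj R prio q t := by
    have h1 : nRounds I S = t + (nRounds I S - t) := by unfold nRounds; omega
    rw [h1]
    exact daStep_fix_of_traj_eq R prio q hfix
  rw [this, hfix]

/-- The final state. -/
def finalState : I → ℕ := traj R prio q (nRounds I S)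

lemma held_of_target_final (hR : ∀ i, ValidPref (R i)) {i : I} {s : S}
    (h : daTarget R (finalState R prio q) i = some s) :
    i ∈ daHeld R prio q (finalState R prio q) s := by
  by_contra hh
  have h1 := daStep_of_rejected R prio q h hh
  have h2 := congrFun (daStep_final R prio q hR) i
  unfold finalState at h1
  omega

lemma gs_eq_target (hR : ∀ i, ValidPref (R i)) (i : I) :
    GS R prio q i = daTarget R (finalState R prio q) i := by
  have hdef : GS R prio q i =
      match daTarget R (finalState R prio q) i with
      | none => none
      | some s => if i ∈ daHeld R prio q (finalState R prio q) s then some s else none := rfl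
  rw [hdef]
  rcases h : daTarget R (finalState R prio q) i with _ | s
  · rfl
  · simp [held_of_target_final R prio q hR h]

/-- The list of current applicants of school `s`, in priority order. -/
def appList (t : ℕ) (s : S) : List I :=
  (prio s).filter (fun j => decide (daTarget R (traj R prio q t) j = some s))

lemma daHeld_eq_appList (t : ℕ) (s : S) :
    daHeld R prio q (traj R prio q t) s = (appList R prio q t s).take (q s) := rfl

lemma mem_appList (hprio : ∀ s, ValidPrio (prio s)) {t : ℕ} {s : S} {j : I} :
    j ∈ appList R prio q t s ↔ daTarget R (traj R prio q t) j = some s := by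
  unfold appList
  rw [List.mem_filter, decide_eq_true_iff]
  exact ⟨fun h => h.2, fun h => ⟨(hprio s).2 j, h⟩⟩

lemma appList_nodup (hprio : ∀ s, ValidPrio (prio s)) (t : ℕ) (s : S) :
    (appList R prio q t s).Nodup := (hprio s).1.filter _

lemma appList_length_final (hR : ∀ i, ValidPref (R i)) (hprio : ∀ s, ValidPrio (prio s)) (s : S) :
    (appList R prio q (nRounds I S) s).length ≤ q s := by
  have hsub : ∀ x ∈ appList R prio q (nRounds I S) s,
      x ∈ (appList R prio q (nRounds I S) s).take (q s) := by
    intro x hx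
    have htar := (mem_appList R prio q hprio).1 hx
    have h2 : x ∈ daHeld R prio q (finalState R prio q) s :=
      held_of_target_final R prio q hR htar
    unfold finalState at h2
    rw [daHeld_eq_appList] at h2
    exact h2
  have h1 : (appList R prio q (nRounds I S) s).length ≤
      ((appList R prio q (nRounds I S) s).take (q s)).length :=
    length_le_of_nodup_subset (appList_nodup R prio q hprio _ s) hsub
  have h2 : ((appList R prio q (nRounds I S) s).take (q s)).length ≤ q s := by
    rw [List.length_take]; omega
  omega

lemma gs_eq_some_iff (hR : ∀ i, ValidPref (R i)) (hprio : ∀ s, ValidPrio (prio s))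
    {j : I} {s : S} :
    GS R prio q j = some s ↔ j ∈ appList R prio q (nRounds I S) s := by
  rw [gs_eq_target R prio q hR, mem_appList R prio q hprio]
  unfold finalState
  exact Iff.rfl

lemma gs_card_filter (hR : ∀ i, ValidPref (R i)) (hprio : ∀ s, ValidPrio (prio s)) (s : S) :
    (Finset.univ.filter (fun j => GS R prio q j = some s)).card =
      (appList R prio q (nRounds I S) s).length := by
  rw [← List.toFinset_card_of_nodup (appList_nodup R prio q hprio _ s)]
  congr 1
  apply Finset.ext
  intro j
  simp only [Finset.mem_filter, Finset.mem_univ, true_and, List.mem_toFinset]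
  exact gs_eq_some_iff R prio q hR hprio

lemma gs_isMatching (hR : ∀ i, ValidPref (R i)) (hprio : ∀ s, ValidPrio (prio s)) :
    IsMatching q (GS R prio q) := by
  intro s
  rw [gs_card_filter R prio q hR hprio]
  exact appList_length_final R prio q hR hprio s

lemma gs_some_mem_acc (hR : ∀ i, ValidPref (R i)) {j : I} {s : S}
    (h : GS R prio q j = some s) : s ∈ acceptables (R j) := by
  rw [gs_eq_target R prio q hR] at h
  obtain ⟨hlt, hget⟩ := (daTarget_eq_some R).1 h
  exact hget ▸ List.getElem_mem hlt

end GSRun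

section GSRun2

variable {I S : Type*} [Fintype I] [DecidableEq I] [Fintype S] [DecidableEq S]
variable (R : I → List (Option S)) (prio : S → List I) (q : S → ℕ)

/-- `j` is rejected by `s` in round `t`. -/
def RejectedAt (t : ℕ) (j : I) (s : S) : Prop :=
  daTarget R (traj R prio q t) j = some s ∧ j ∉ daHeld R prio q (traj R prio q t) s

lemma held_of_rejectedAt (hprio : ∀ s, ValidPrio (prio s)) {t : ℕ} {j : I} {s : S}
    (h : RejectedAt R prio q t j s) :
    (daHeld R prio q (traj R prio q t) s).length = q s ∧
      ∀ x ∈ daHeld R prio q (traj R prio q t) s, prioLt (prio s) x j := by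
  obtain ⟨htar, hnh⟩ := h
  have hjF : j ∈ appList R prio q t s := (mem_appList R prio q hprio).2 htar
  have hFnd : (appList R prio q t s).Nodup := appList_nodup R prio q hprio t s
  rw [daHeld_eq_appList] at hnh ⊢
  have hjidx : q s ≤ (appList R prio q t s).idxOf j := by
    by_contra hc
    exact hnh ((mem_take_iff_indexOf_lt hFnd).2 ⟨hjF, by omega⟩)
  have hlen : q s < (appList R prio q t s).length := by
    have := List.idxOf_lt_length_iff.2 hjF
    omega
  constructor
  · rw [List.length_take]; omega
  · intro x hx
    obtain ⟨hxF, hxidx⟩ := (mem_take_iff_indexOf_lt hFnd).1 hx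
    unfold prioLt
    have hsub : (appList R prio q t s).Sublist (prio s) := List.filter_sublist
    exact sublist_indexOf_lt hsub (hprio s).1 hxF hjF (by omega)

lemma target_ne_after_rejected (hR : ∀ i, ValidPref (R i)) {t : ℕ} {j : I} {s : S}
    (h : RejectedAt R prio q t j s) :
    ∀ u, t < u → daTarget R (traj R prio q u) j ≠ some s := by
  obtain ⟨htar, hnh⟩ := h
  obtain ⟨hlt, hget⟩ := (daTarget_eq_some R).1 htar
  intro u hu hcon
  obtain ⟨hlt2, hget2⟩ := (daTarget_eq_some R).1 hcon
  have hnd := acc_nodup (hR j)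
  have h1 : (acceptables (R j)).idxOf s = traj R prio q t j := by
    rw [← hget]; exact List.Nodup.idxOf_getElem hnd _ hlt
  have h2 : (acceptables (R j)).idxOf s = traj R prio q u j := by
    rw [← hget2]; exact List.Nodup.idxOf_getElem hnd _ hlt2
  have h3 : traj R prio q (t+1) j = traj R prio q t j + 1 := by
    rw [traj_succ]; exact daStep_of_rejected R prio q htar hnh
  have h4 : traj R prio q (t+1) j ≤ traj R prio q u j := traj_mono R prio q (by omega) j
  omega

lemma rejected_invariant (hR : ∀ i, ValidPref (R i)) (hprio : ∀ s, ValidPrio (prio s))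
    {t : ℕ} {j : I} {s : S} (h : RejectedAt R prio q t j s) :
    ∀ u, t ≤ u → (daHeld R prio q (traj R prio q u) s).length = q s ∧
      ∀ x ∈ daHeld R prio q (traj R prio q u) s, prioLt (prio s) x j := by
  intro u hu
  induction u, hu using Nat.le_induction with
  | base => exact held_of_rejectedAt R prio q hprio h
  | succ u hu ih =>
    obtain ⟨ihlen, ihbet⟩ := ih
    have hheldnd : (daHeld R prio q (traj R prio q u) s).Nodup := by
      rw [daHeld_eq_appList]
      exact (appList_nodup R prio q hprio u s).sublist (List.take_sublist _ _)
    have hsub : ∀ x ∈ daHeld R prio q (traj R prio q u) s, x ∈ appList R prio q (u+1) s := by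
      intro x hx
      have hxF : x ∈ appList R prio q u s := by
        rw [daHeld_eq_appList] at hx
        exact List.take_subset _ _ hx
      have htarx : daTarget R (traj R prio q u) x = some s := (mem_appList R prio q hprio).1 hxF
      have hkeep : traj R prio q (u+1) x = traj R prio q u x := by
        rw [traj_succ]; exact daStep_of_held R prio q htarx hx
      refine (mem_appList R prio q hprio).2 ?_
      unfold daTarget
      rw [hkeep]
      exact htarx
    have hFnd : (appList R prio q (u+1) s).Nodup := appList_nodup R prio q hprio (u+1) s
    have hqlen : q s ≤ (appList R prio q (u+1) s).length := by
      have := length_le_of_nodup_subset hheldnd hsub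
      omega
    constructor
    · rw [daHeld_eq_appList, List.length_take]; omega
    · intro x hx
      rw [daHeld_eq_appList] at hx
      obtain ⟨hxF, hxidx⟩ := (mem_take_iff_indexOf_lt hFnd).1 hx
      by_contra hc
      have hxj : x ≠ j := by
        rintro rfl
        exact target_ne_after_rejected R prio q hR h (u+1) (by omega)
          ((mem_appList R prio q hprio).1 hxF)
      have hxmem : x ∈ prio s := (hprio s).2 x
      have hjmem : j ∈ prio s := (hprio s).2 j
      have hge : (prio s).idxOf j < (prio s).idxOf x := by
        unfold prioLt at hc
        have hne : (prio s).idxOf x ≠ (prio s).idxOf j :=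
          fun e => hxj ((List.idxOf_inj hxmem).1 e)
        omega
      have hysub : ∀ y ∈ daHeld R prio q (traj R prio q u) s,
          y ∈ (appList R prio q (u+1) s).take ((appList R prio q (u+1) s).idxOf x) := by
        intro y hy
        have hyF := hsub y hy
        have hylt := ihbet y hy
        have h5 : (prio s).idxOf y < (prio s).idxOf x := by
          unfold prioLt at hylt; omega
        have hsub2 : (appList R prio q (u+1) s).Sublist (prio s) := List.filter_sublist
        have h6 : (appList R prio q (u+1) s).idxOf y < (appList R prio q (u+1) s).idxOf x :=
          (sublist_indexOf_lt_iff hsub2 (hprio s).1 hyF hxF).2 h5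
        exact (mem_take_iff_indexOf_lt hFnd).2 ⟨hyF, h6⟩
      have h7 := length_le_of_nodup_subset hheldnd hysub
      have h8 : ((appList R prio q (u+1) s).take ((appList R prio q (u+1) s).idxOf x)).length ≤
          (appList R prio q (u+1) s).idxOf x := by
        rw [List.length_take]; omega
      omega

lemma nat_crossing {g : ℕ → ℕ} (h0 : g 0 = 0) (hstep : ∀ t, g (t+1) ≤ g t + 1) :
    ∀ {N m : ℕ}, m < g N → ∃ t, t < N ∧ g t = m ∧ g (t+1) = m + 1 := by
  intro N
  induction N with
  | zero => intro m h; omega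
  | succ n ih =>
    intro m h
    by_cases hm : m < g n
    · obtain ⟨t, ht, h1, h2⟩ := ih hm
      exact ⟨t, by omega, h1, h2⟩
    · have h3 := hstep n
      exact ⟨n, by omega, by omega, by omega⟩

lemma exists_rejection (hR : ∀ i, ValidPref (R i)) {j : I} {m : ℕ} {s : S}
    (hm : m < traj R prio q (nRounds I S) j) (hs : (acceptables (R j))[m]? = some s) :
    ∃ t, t < nRounds I S ∧ RejectedAt R prio q t j s := by
  obtain ⟨t, ht, h1, h2⟩ := nat_crossing (g := fun t => traj R prio q t j) rfl
    (fun t => by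
      show traj R prio q (t+1) j ≤ traj R prio q t j + 1
      rw [traj_succ]; exact daStep_le R prio q _ j) hm
  have htar : daTarget R (traj R prio q t) j = some s := by
    unfold daTarget; rw [h1]; exact hs
  refine ⟨t, ht, htar, ?_⟩
  intro hheld
  have h3 := daStep_of_held R prio q htar hheld
  rw [traj_succ] at h2
  omega

theorem gs_stable (hR : ∀ i, ValidPref (R i)) (hprio : ∀ s, ValidPrio (prio s)) :
    IsStable R prio q (GS R prio q) := by
  constructor
  · intro i
    rcases hgs : GS R prio q i with _ | s
    · exact fun hcon => absurd hcon (lt_irrefl _)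
    · intro hcon
      have hmem := gs_some_mem_acc R prio q hR hgs
      have h1 := (mem_acc_iff (hR i)).1 hmem
      unfold prefLt at hcon
      omega
  · rintro i ⟨s, hpl, hcond⟩
    have hmem_s : s ∈ acceptables (R i) := by
      rcases hgs : GS R prio q i with _ | s₂
      · rw [hgs] at hpl; exact (prefLt_some_none_iff (hR i)).1 hpl
      · rw [hgs] at hpl
        have hs₂ := gs_some_mem_acc R prio q hR hgs
        by_contra hns
        have h1 := indexOf_none_lt_not_mem (hR i) hns
        have h2 := (mem_acc_iff (hR i)).1 hs₂
        unfold prefLt at hpl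
        omega
    have hidx : (acceptables (R i)).idxOf s < traj R prio q (nRounds I S) i := by
      rcases hgs : GS R prio q i with _ | s₂
      · have h1 : (acceptables (R i)).length ≤ traj R prio q (nRounds I S) i := by
          rw [gs_eq_target R prio q hR] at hgs
          unfold daTarget finalState at hgs
          exact List.getElem?_eq_none_iff.1 hgs
        have := List.idxOf_lt_length_iff.2 hmem_s
        omega
      · rw [hgs] at hpl
        have hs₂mem := gs_some_mem_acc R prio q hR hgs
        have h3 : (acceptables (R i)).idxOf s < (acceptables (R i)).idxOf s₂ :=
          (prefLt_some_some_iff (hR i) hmem_s hs₂mem).1 hpl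
        have h4 : (acceptables (R i)).idxOf s₂ = traj R prio q (nRounds I S) i := by
          rw [gs_eq_target R prio q hR] at hgs
          obtain ⟨hlt, hget⟩ := (daTarget_eq_some R).1 hgs
          rw [← hget]
          exact List.Nodup.idxOf_getElem (acc_nodup (hR i)) _ hlt
        omega
    obtain ⟨t, ht, hrej⟩ := exists_rejection R prio q hR hidx (by
      rw [List.getElem?_eq_some_iff]
      exact ⟨List.idxOf_lt_length_iff.2 hmem_s, List.getElem_idxOf _⟩)
    obtain ⟨hlen, hbet⟩ :=
      rejected_invariant R prio q hR hprio hrej (nRounds I S) (by omega)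
    rcases hcond with hlt | ⟨j, hj, hij⟩
    · rw [gs_card_filter R prio q hR hprio] at hlt
      rw [daHeld_eq_appList, List.length_take] at hlen
      omega
    · have hjheld : j ∈ daHeld R prio q (traj R prio q (nRounds I S)) s := by
        have hjF : j ∈ appList R prio q (nRounds I S) s :=
          (gs_eq_some_iff R prio q hR hprio).1 hj
        have h5 := held_of_target_final R prio q hR ((mem_appList R prio q hprio).1 hjF)
        unfold finalState at h5
        exact h5
      have h6 := hbet j hjheld
      unfold prioLt at h6 hij
      omega

end GSRun2

section GSRun3

variable {I S : Type*} [Fintype I] [DecidableEq I] [Fintype S] [DecidableEq S]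
variable (R : I → List (Option S)) (prio : S → List I) (q : S → ℕ)

lemma stable_some_mem_acc (hR : ∀ i, ValidPref (R i)) {ζ : I → Option S}
    (hζ : IsStable R prio q ζ) {j : I} {s : S} (h : ζ j = some s) :
    s ∈ acceptables (R j) := by
  have hir := hζ.1 j
  rw [h] at hir
  by_contra hns
  exact hir (indexOf_none_lt_not_mem (hR j) hns)

lemma so_invariant (hR : ∀ i, ValidPref (R i)) (hprio : ∀ s, ValidPrio (prio s))
    {ζ : I → Option S} (hζm : IsMatching q ζ) (hζ : IsStable R prio q ζ) :
    ∀ t j s, ζ j = some s → traj R prio q t j ≤ (acceptables (R j)).idxOf s := by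
  intro t
  induction t with
  | zero => intro j s _; rw [traj_zero]; omega
  | succ t ih =>
    intro j s hjs
    have hmem : s ∈ acceptables (R j) := stable_some_mem_acc R prio q hR hζ hjs
    have hle := ih j s hjs
    rw [traj_succ]
    rcases daStep_cases R prio q (traj R prio q t) j with heq | ⟨s₂, htar, hnh, hinc⟩
    · omega
    · rw [hinc]
      rcases Nat.lt_or_ge (traj R prio q t j) ((acceptables (R j)).idxOf s) with hlt | hge
      · omega
      · exfalso
        have heqidx : traj R prio q t j = (acceptables (R j)).idxOf s := by omega
        have hs₂ : s₂ = s := by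
          obtain ⟨hlt2, hget⟩ := (daTarget_eq_some R).1 htar
          have h5 := List.Nodup.idxOf_getElem (acc_nodup (hR j)) _ hlt2
          rw [hget] at h5
          exact (List.idxOf_inj (hget ▸ List.getElem_mem hlt2)).1 (by omega)
        subst hs₂
        obtain ⟨hlen, hbet⟩ := held_of_rejectedAt R prio q hprio ⟨htar, hnh⟩
        have hheldnd : (daHeld R prio q (traj R prio q t) s₂).Nodup := by
          rw [daHeld_eq_appList]
          exact (appList_nodup R prio q hprio t s₂).sublist (List.take_sublist _ _)
        have hex : ∃ x ∈ daHeld R prio q (traj R prio q t) s₂, ζ x ≠ some s₂ := by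
          by_contra hall
          push_neg at hall
          have hsubset : insert j (daHeld R prio q (traj R prio q t) s₂).toFinset ⊆
              Finset.univ.filter (fun x => ζ x = some s₂) := by
            intro x hx
            rcases Finset.mem_insert.1 hx with rfl | hx
            · simp [hjs]
            · rw [List.mem_toFinset] at hx
              simp [hall x hx]
          have hjni : j ∉ (daHeld R prio q (traj R prio q t) s₂).toFinset := by
            rw [List.mem_toFinset]
            intro hjh
            have h1 := hbet j hjh
            unfold prioLt at h1
            omega
          have hcard := Finset.card_le_card hsubset
          rw [Finset.card_insert_of_notMem hjni,
            List.toFinset_card_of_nodup hheldnd, hlen] at hcard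
          have := hζm s₂
          omega
        obtain ⟨x, hxh, hxs⟩ := hex
        have hxF : x ∈ appList R prio q t s₂ := by
          rw [daHeld_eq_appList] at hxh
          exact List.take_subset _ _ hxh
        have htarx : daTarget R (traj R prio q t) x = some s₂ :=
          (mem_appList R prio q hprio).1 hxF
        obtain ⟨hltx, hgetx⟩ := (daTarget_eq_some R).1 htarx
        have hsx_mem : s₂ ∈ acceptables (R x) := hgetx ▸ List.getElem_mem hltx
        have hidx_x : (acceptables (R x)).idxOf s₂ = traj R prio q t x := by
          rw [← hgetx]
          exact List.Nodup.idxOf_getElem (acc_nodup (hR x)) _ hltx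
        apply hζ.2 x
        refine ⟨s₂, ?_, Or.inr ⟨j, hjs, hbet x hxh⟩⟩
        rcases hζx : ζ x with _ | s₃
        · exact (prefLt_some_none_iff (hR x)).2 hsx_mem
        · have hs₃mem := stable_some_mem_acc R prio q hR hζ hζx
          have h1 := ih x s₃ hζx
          have hne : s₂ ≠ s₃ := fun e => hxs (by rw [hζx, e])
          have h2 : (acceptables (R x)).idxOf s₂ ≠ (acceptables (R x)).idxOf s₃ :=
            fun e => hne ((List.idxOf_inj hsx_mem).1 e)
          exact (prefLt_some_some_iff (hR x) hsx_mem hs₃mem).2 (by omega)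

lemma gs_optimal (hR : ∀ i, ValidPref (R i)) (hprio : ∀ s, ValidPrio (prio s))
    {ζ : I → Option S} (hζm : IsMatching q ζ) (hζ : IsStable R prio q ζ)
    {j : I} {s : S} (h : ζ j = some s) :
    ∃ s₂, GS R prio q j = some s₂ ∧ s₂ ∈ acceptables (R j) ∧
      (acceptables (R j)).idxOf s₂ ≤ (acceptables (R j)).idxOf s := by
  have hmem : s ∈ acceptables (R j) := stable_some_mem_acc R prio q hR hζ h
  have hle := so_invariant R prio q hR hprio hζm hζ (nRounds I S) j s h
  have hlt : traj R prio q (nRounds I S) j < (acceptables (R j)).length := by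
    have := List.idxOf_lt_length_iff.2 hmem
    omega
  have htar : daTarget R (finalState R prio q) j =
      some ((acceptables (R j))[traj R prio q (nRounds I S) j]) := by
    unfold daTarget finalState
    exact List.getElem?_eq_some_iff.2 ⟨hlt, rfl⟩
  refine ⟨_, by rw [gs_eq_target R prio q hR]; exact htar, List.getElem_mem hlt, ?_⟩
  rw [List.Nodup.idxOf_getElem (acc_nodup (hR j)) _ hlt]
  exact hle

lemma gs_not_prefLt (hR : ∀ i, ValidPref (R i)) (hprio : ∀ s, ValidPrio (prio s))
    {ζ : I → Option S} (hζm : IsMatching q ζ) (hζ : IsStable R prio q ζ) (j : I) :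
    ¬ prefLt (R j) (ζ j) (GS R prio q j) := by
  rcases hζj : ζ j with _ | s
  · rcases hgs : GS R prio q j with _ | s₂
    · exact lt_irrefl _
    · intro hcon
      have hmem := gs_some_mem_acc R prio q hR hgs
      have h1 := (mem_acc_iff (hR j)).1 hmem
      unfold prefLt at hcon
      omega
  · obtain ⟨s₂, hgs, hs₂mem, hidx⟩ := gs_optimal R prio q hR hprio hζm hζ hζj
    rw [hgs]
    intro hcon
    have hmem := stable_some_mem_acc R prio q hR hζ hζj
    have h1 := (prefLt_some_some_iff (hR j) hmem hs₂mem).1 hcon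
    omega

lemma gs_ne_none_of_stable (hR : ∀ i, ValidPref (R i)) (hprio : ∀ s, ValidPrio (prio s))
    {ζ : I → Option S} (hζm : IsMatching q ζ) (hζ : IsStable R prio q ζ)
    {j : I} {s : S} (hgs : GS R prio q j = some s) : ζ j ≠ none := by
  classical
  have hsub : Finset.univ.filter (fun x => ζ x ≠ none) ⊆
      Finset.univ.filter (fun x => GS R prio q x ≠ none) := by
    intro x hx
    rw [Finset.mem_filter] at hx
    obtain ⟨s₃, hs₃⟩ := Option.ne_none_iff_exists'.1 hx.2
    obtain ⟨s₂, hgs₂, _, _⟩ := gs_optimal R prio q hR hprio hζm hζ hs₃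
    rw [Finset.mem_filter]
    exact ⟨Finset.mem_univ x, by rw [hgs₂]; simp⟩
  have hcards : ∀ s₂ : S, (Finset.univ.filter (fun x => GS R prio q x = some s₂)).card ≤
      (Finset.univ.filter (fun x => ζ x = some s₂)).card := by
    intro s₂
    by_cases hq : (Finset.univ.filter (fun x => ζ x = some s₂)).card < q s₂
    · apply Finset.card_le_card
      intro x hx
      rw [Finset.mem_filter] at hx ⊢
      refine ⟨Finset.mem_univ x, ?_⟩
      by_contra hxz
      apply hζ.2 x
      refine ⟨s₂, ?_, Or.inl hq⟩
      have hs₂mem : s₂ ∈ acceptables (R x) := gs_some_mem_acc R prio q hR hx.2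
      rcases hζx : ζ x with _ | s₃
      · exact (prefLt_some_none_iff (hR x)).2 hs₂mem
      · obtain ⟨s₄, hgs₄, hs₄mem, hidx₄⟩ := gs_optimal R prio q hR hprio hζm hζ hζx
        have hs₄e : s₄ = s₂ := by
          rw [hx.2] at hgs₄
          exact (Option.some_injective S hgs₄.symm)
        subst hs₄e
        have hs₃mem := stable_some_mem_acc R prio q hR hζ hζx
        have hne : s₄ ≠ s₃ := fun e => hxz (by rw [hζx, ← e])
        refine (prefLt_some_some_iff (hR x) hs₂mem hs₃mem).2 ?_
        have h2 : (acceptables (R x)).idxOf s₄ ≠ (acceptables (R x)).idxOf s₃ :=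
          fun e => hne ((List.idxOf_inj hs₂mem).1 e)
        omega
    · have h1 := gs_isMatching R prio q hR hprio s₂
      omega
  have hfibG : (Finset.univ.filter (fun x => GS R prio q x ≠ none)).card =
      ∑ s₂ ∈ Finset.univ, (Finset.univ.filter (fun x => GS R prio q x = some s₂)).card := by
    rw [Finset.card_eq_sum_card_fiberwise
      (f := fun x => (GS R prio q x).getD s) (t := Finset.univ) (fun x _ => Finset.mem_univ _)]
    apply Finset.sum_congr rfl
    intro s₂ _
    congr 1
    apply Finset.ext
    intro x
    simp only [Finset.mem_filter, Finset.mem_univ, true_and]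
    cases hgx : GS R prio q x <;> simp
  have hfibζ : (Finset.univ.filter (fun x => ζ x ≠ none)).card =
      ∑ s₂ ∈ Finset.univ, (Finset.univ.filter (fun x => ζ x = some s₂)).card := by
    rw [Finset.card_eq_sum_card_fiberwise
      (f := fun x => (ζ x).getD s) (t := Finset.univ) (fun x _ => Finset.mem_univ _)]
    apply Finset.sum_congr rfl
    intro s₂ _
    congr 1
    apply Finset.ext
    intro x
    simp only [Finset.mem_filter, Finset.mem_univ, true_and]
    cases hgx : ζ x <;> simp
  have hsum : (Finset.univ.filter (fun x => GS R prio q x ≠ none)).card ≤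
      (Finset.univ.filter (fun x => ζ x ≠ none)).card := by
    rw [hfibG, hfibζ]
    exact Finset.sum_le_sum (fun s₂ _ => hcards s₂)
  have heq := Finset.eq_of_subset_of_card_le hsub hsum
  have hjMG : j ∈ Finset.univ.filter (fun x => GS R prio q x ≠ none) := by
    rw [Finset.mem_filter]
    exact ⟨Finset.mem_univ j, by rw [hgs]; simp⟩
  rw [← heq, Finset.mem_filter] at hjMG
  exact hjMG.2

end GSRun3

section GSTrunc

variable {I S : Type*} [Fintype I] [DecidableEq I] [Fintype S] [DecidableEq S]
variable (prio : S → List I) (q : S → ℕ)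

lemma daStep_congr_of_target_eq {R R' : I → List (Option S)} (σ : I → ℕ)
    (h : daTarget R' σ = daTarget R σ) :
    daStep R' prio q σ = daStep R prio q σ := by
  have hheld : ∀ s, daHeld R' prio q σ s = daHeld R prio q σ s := by
    intro s; unfold daHeld; rw [h]
  funext j
  unfold daStep
  rw [h]
  rcases htar : daTarget R σ j with _ | s
  · rfl
  · show (if j ∈ daHeld R' prio q σ s then σ j else σ j + 1) =
      (if j ∈ daHeld R prio q σ s then σ j else σ j + 1)
    rw [hheld s]

lemma daTarget_eq_of_lt {R R' : I → List (Option S)} {i : I} {k : ℕ}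
    (hi : acceptables (R' i) = (acceptables (R i)).take k)
    (ho : ∀ j, j ≠ i → acceptables (R' j) = acceptables (R j))
    (σ : I → ℕ) (hσ : σ i < k) : daTarget R' σ = daTarget R σ := by
  funext j
  unfold daTarget
  by_cases hj : j = i
  · subst hj
    rw [hi]
    exact List.getElem?_take_of_lt hσ
  · rw [ho j hj]

lemma traj_eq_of_acc_eq {R R' : I → List (Option S)} {i : I} {k : ℕ}
    (hi : acceptables (R' i) = (acceptables (R i)).take k)
    (ho : ∀ j, j ≠ i → acceptables (R' j) = acceptables (R j)) :
    ∀ t, (∀ u, u < t → traj R prio q u i < k) →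
      traj R' prio q t = traj R prio q t := by
  intro t
  induction t with
  | zero => intro _; rfl
  | succ t ih =>
    intro hcond
    have ih' := ih (fun u hu => hcond u (by omega))
    rw [traj_succ, traj_succ, ih']
    exact daStep_congr_of_target_eq prio q _
      (daTarget_eq_of_lt hi ho _ (hcond t (by omega)))

lemma tr_eq {R R' : I → List (Option S)} {i : I} {k : ℕ}
    (hR : ∀ j, ValidPref (R j)) (hR' : ∀ j, ValidPref (R' j))
    (hi : acceptables (R' i) = (acceptables (R i)).take k)
    (ho : ∀ j, j ≠ i → acceptables (R' j) = acceptables (R j))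
    (hlt : traj R prio q (nRounds I S) i < k) :
    GS R' prio q = GS R prio q := by
  have hstates := traj_eq_of_acc_eq prio q hi ho (nRounds I S)
    (fun u hu => lt_of_le_of_lt (traj_mono R prio q (by omega) i) hlt)
  funext j
  rw [gs_eq_target R' prio q hR', gs_eq_target R prio q hR]
  unfold finalState
  rw [hstates]
  rw [daTarget_eq_of_lt hi ho _ hlt]

lemma tr_none {R R' : I → List (Option S)} {i : I} {k : ℕ}
    (hR' : ∀ j, ValidPref (R' j))
    (hi : acceptables (R' i) = (acceptables (R i)).take k)
    (ho : ∀ j, j ≠ i → acceptables (R' j) = acceptables (R j))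
    (hge : k ≤ traj R prio q (nRounds I S) i) :
    GS R' prio q i = none := by
  classical
  have hP : ∃ t, k ≤ traj R prio q t i := ⟨nRounds I S, hge⟩
  set d := Nat.find hP with hd
  have hspec : k ≤ traj R prio q d i := Nat.find_spec hP
  have hmin : ∀ u, u < d → traj R prio q u i < k := by
    intro u hu
    have := Nat.find_min hP hu
    omega
  have hdN : d ≤ nRounds I S := Nat.find_min' hP hge
  have hstates := traj_eq_of_acc_eq prio q hi ho d hmin
  have hbig : k ≤ traj R' prio q (nRounds I S) i := by
    have h1 : traj R' prio q d i = traj R prio q d i := congrFun hstates i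
    have h2 := traj_mono R' prio q hdN i
    omega
  rw [gs_eq_target R' prio q hR']
  unfold finalState daTarget
  apply List.getElem?_eq_none_iff.2
  rw [hi, List.length_take]
  omega

end GSTrunc

section GSSP

variable {I S : Type*} [Fintype I] [DecidableEq I] [Fintype S] [DecidableEq S]
variable (R : I → List (Option S)) (prio : S → List I) (q : S → ℕ)

lemma prefLt_gs_elim (hR : ∀ j, ValidPref (R j)) {i : I} {o : Option S}
    (hlt : prefLt (R i) o (GS R prio q i)) :
    ∃ s', o = some s' ∧ s' ∈ acceptables (R i) ∧
      (acceptables (R i)).idxOf s' < traj R prio q (nRounds I S) i := by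
  obtain ⟨s', hs'⟩ : ∃ s', o = some s' := by
    rcases hn : o with _ | s'
    · exfalso
      rw [hn] at hlt
      rcases hgs : GS R prio q i with _ | s₂
      · rw [hgs] at hlt; exact absurd hlt (lt_irrefl _)
      · rw [hgs] at hlt
        have hmem := gs_some_mem_acc R prio q hR hgs
        have h1 := (mem_acc_iff (hR i)).1 hmem
        unfold prefLt at hlt
        omega
    · exact ⟨s', rfl⟩
  subst hs'
  have hs'mem : s' ∈ acceptables (R i) := by
    rcases hgs : GS R prio q i with _ | s₂
    · rw [hgs] at hlt; exact (prefLt_some_none_iff (hR i)).1 hlt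
    · rw [hgs] at hlt
      have hmem := gs_some_mem_acc R prio q hR hgs
      by_contra hns
      have h1 := indexOf_none_lt_not_mem (hR i) hns
      have h2 := (mem_acc_iff (hR i)).1 hmem
      unfold prefLt at hlt
      omega
  refine ⟨s', rfl, hs'mem, ?_⟩
  rcases hgs : GS R prio q i with _ | s₂
  · have h1 : (acceptables (R i)).length ≤ traj R prio q (nRounds I S) i := by
      rw [gs_eq_target R prio q hR] at hgs
      unfold daTarget finalState at hgs
      exact List.getElem?_eq_none_iff.1 hgs
    have := List.idxOf_lt_length_iff.2 hs'mem
    omega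
  · rw [hgs] at hlt
    have hs₂mem := gs_some_mem_acc R prio q hR hgs
    have h3 : (acceptables (R i)).idxOf s' < (acceptables (R i)).idxOf s₂ :=
      (prefLt_some_some_iff (hR i) hs'mem hs₂mem).1 hlt
    have h4 : (acceptables (R i)).idxOf s₂ = traj R prio q (nRounds I S) i := by
      rw [gs_eq_target R prio q hR] at hgs
      obtain ⟨hlt2, hget⟩ := (daTarget_eq_some R).1 hgs
      rw [← hget]
      exact List.Nodup.idxOf_getElem (acc_nodup (hR i)) _ hlt2
    omega

lemma isStable_of_update_pref {A B : I → List (Option S)} {ζ : I → Option S} (i : I)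
    (h : ∀ j, j ≠ i → A j = B j) (hst : IsStable A prio q ζ)
    (hIR : ¬ prefLt (B i) none (ζ i))
    (hBlock : ∀ s, ¬ Blocks B prio q ζ i s) : IsStable B prio q ζ := by
  constructor
  · intro j
    by_cases hj : j = i
    · subst hj; exact hIR
    · rw [← h j hj]; exact hst.1 j
  · rintro j ⟨s, hbl⟩
    by_cases hj : j = i
    · subst hj; exact hBlock s hbl
    · exact hst.2 j ⟨s, ⟨by rw [h j hj]; exact hbl.1, hbl.2⟩⟩

theorem gs_sp (hR : ∀ j, ValidPref (R j)) (hprio : ∀ s, ValidPrio (prio s))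
    (i : I) (Q : List (Option S)) (hQ : ValidPref Q) :
    ¬ prefLt (R i) (GS (Function.update R i Q) prio q i) (GS R prio q i) := by
  intro hlt
  have hR₁v : ∀ j, ValidPref (Function.update R i Q j) := by
    intro j
    by_cases hj : j = i
    · subst hj; rw [Function.update_self]; exact hQ
    · rw [Function.update_of_ne hj]; exact hR j
  have hνs : IsStable (Function.update R i Q) prio q (GS (Function.update R i Q) prio q) :=
    gs_stable _ prio q hR₁v hprio
  have hνm : IsMatching q (GS (Function.update R i Q) prio q) :=
    gs_isMatching _ prio q hR₁v hprio
  obtain ⟨s', hνi, hs'mem, hs'idx⟩ := prefLt_gs_elim R prio q hR hlt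
  -- Market M1: student i reports only s'
  have hM1v : ∀ j, ValidPref (Function.update R i (mkSingle s') j) := by
    intro j
    by_cases hj : j = i
    · subst hj; rw [Function.update_self]; exact mkSingle_valid s'
    · rw [Function.update_of_ne hj]; exact hR j
  have hidx0 : (mkSingle s').idxOf (some s') = 0 := by
    simp only [mkSingle]
    exact List.idxOf_cons_self
  have hs'acc1 : s' ∈ acceptables (mkSingle s') := by
    rw [acc_mkSingle]; exact List.mem_singleton.2 rfl
  have hνM1 : IsStable (Function.update R i (mkSingle s')) prio q
      (GS (Function.update R i Q) prio q) := by
    apply isStable_of_update_pref prio q i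
      (fun j hj => by rw [Function.update_of_ne hj, Function.update_of_ne hj]) hνs
    · rw [Function.update_self, hνi]
      intro hcon
      have h1 := (mem_acc_iff (mkSingle_valid s')).1 hs'acc1
      unfold prefLt at hcon
      omega
    · intro s hbl
      obtain ⟨h1, _⟩ := hbl
      rw [Function.update_self, hνi] at h1
      unfold prefLt at h1
      rw [hidx0] at h1
      omega
  -- GS of M1 gives i the school s'
  have hρ : GS (Function.update R i (mkSingle s')) prio q i = some s' := by
    obtain ⟨s₂, hgs₂, hmem₂, hidx₂⟩ :=
      gs_optimal (Function.update R i (mkSingle s')) prio q hM1v hprio hνm hνM1 hνi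
    rw [Function.update_self, acc_mkSingle] at hmem₂
    rw [hgs₂, List.mem_singleton.1 hmem₂]
  -- Market M2: i's true list truncated just after s'
  have hM2v : ∀ j, ValidPref
      (Function.update R i (truncate (R i) ((acceptables (R i)).idxOf s' + 1)) j) := by
    intro j
    by_cases hj : j = i
    · subst hj; rw [Function.update_self]; exact truncate_valid (hR _) _
    · rw [Function.update_of_ne hj]; exact hR j
  have hM2i : acceptables (Function.update R i
        (truncate (R i) ((acceptables (R i)).idxOf s' + 1)) i) =
      (acceptables (R i)).take ((acceptables (R i)).idxOf s' + 1) := by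
    rw [Function.update_self, acc_truncate]
  have hM2o : ∀ j, j ≠ i → acceptables (Function.update R i
        (truncate (R i) ((acceptables (R i)).idxOf s' + 1)) j) = acceptables (R j) := by
    intro j hj
    rw [Function.update_of_ne hj]
  -- i ends unmatched in M2
  have hπi : GS (Function.update R i (truncate (R i) ((acceptables (R i)).idxOf s' + 1)))
      prio q i = none :=
    tr_none prio q hM2v hM2i hM2o (by omega)
  have hπs : IsStable (Function.update R i (truncate (R i) ((acceptables (R i)).idxOf s' + 1)))
      prio q (GS (Function.update R i (truncate (R i) ((acceptables (R i)).idxOf s' + 1))) prio q) :=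
    gs_stable _ prio q hM2v hprio
  have hπm : IsMatching q
      (GS (Function.update R i (truncate (R i) ((acceptables (R i)).idxOf s' + 1))) prio q) :=
    gs_isMatching _ prio q hM2v hprio
  -- π is stable in market M1 as well
  have hs'acc2 : s' ∈ acceptables (Function.update R i
      (truncate (R i) ((acceptables (R i)).idxOf s' + 1)) i) := by
    rw [hM2i]
    exact (mem_take_iff_indexOf_lt (acc_nodup (hR i))).2 ⟨hs'mem, by omega⟩
  have hπM1 : IsStable (Function.update R i (mkSingle s')) prio q
      (GS (Function.update R i (truncate (R i) ((acceptables (R i)).idxOf s' + 1))) prio q) := by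
    apply isStable_of_update_pref prio q i
      (fun j hj => by rw [Function.update_of_ne hj, Function.update_of_ne hj]) hπs
    · rw [Function.update_self, hπi]
      exact lt_irrefl _
    · intro s hbl
      obtain ⟨h1, h2⟩ := hbl
      rw [Function.update_self, hπi] at h1
      have hs_eq : s = s' := by
        have hmem := (prefLt_some_none_iff (mkSingle_valid s')).1 h1
        rw [acc_mkSingle] at hmem
        exact List.mem_singleton.1 hmem
      subst hs_eq
      apply hπs.2 i
      refine ⟨s, ?_, h2⟩
      rw [hπi]
      refine (prefLt_some_none_iff ?_).2 hs'acc2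
      rw [Function.update_self]
      exact truncate_valid (hR i) _
  -- rural hospitals: contradiction
  exact gs_ne_none_of_stable (Function.update R i (mkSingle s')) prio q hM1v hprio
    hπm hπM1 hρ hπi

end GSSP

/-- Theorem 5(ii): for `k > 1`, every manipulating student of
`GS^k` at `(P,≻,q)` is a blocking student for `GS^k(P,≻,q)` under `(P,≻,q)`. -/
theorem manipulating_student_blocks_gsk
    {I S : Type*} [Fintype I] [DecidableEq I] [Fintype S] [DecidableEq S]
    (hIS : Fintype.card S < Fintype.card I)
    (P : I → List (Option S)) (prio : S → List I) (q : S → ℕ)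
    (hP : ∀ i, ValidPref (P i)) (hprio : ∀ s, ValidPrio (prio s))
    (k : ℕ) (hk : 1 < k) (i : I)
    (hm : ManipulatingStudent (fun R => GSk k R prio q) P i) :
    BlockingStudent P prio q (GSk k P prio q) i := by
  classical
  obtain ⟨Q, hQ, hlt0⟩ := hm
  by_contra hnb
  set T : I → List (Option S) := fun j => truncate (P j) k with hT
  have hTv : ∀ j, ValidPref (T j) := by
    intro j; rw [hT]; exact truncate_valid (hP j) k
  have hTacc : ∀ j, acceptables (T j) = (acceptables (P j)).take k := by
    intro j; rw [hT]; exact acc_truncate _ _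
  have hμdef : GSk k P prio q = GS T prio q := by rw [hT]; rfl
  have hmarket : GSk k (Function.update P i Q) prio q =
      GS (Function.update T i (truncate Q k)) prio q := by
    have h1 : (fun j => truncate (Function.update P i Q j) k) =
        Function.update T i (truncate Q k) := by
      funext j
      by_cases hj : j = i
      · subst hj
        rw [Function.update_self, Function.update_self]
      · rw [Function.update_of_ne hj, Function.update_of_ne hj, hT]
    show GS (fun j => truncate (Function.update P i Q j) k) prio q = _
    rw [h1]
  have hlt : prefLt (P i) (GS (Function.update T i (truncate Q k)) prio q i)
      (GS T prio q i) := by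
    have h2 : prefLt (P i) (GSk k (Function.update P i Q) prio q i) (GSk k P prio q i) := hlt0
    rwa [hmarket, hμdef] at h2
  set V : I → List (Option S) := Function.update T i (P i) with hV
  have hVv : ∀ j, ValidPref (V j) := by
    intro j
    rw [hV]
    by_cases hj : j = i
    · subst hj; rw [Function.update_self]; exact hP _
    · rw [Function.update_of_ne hj]; exact hTv j
  have hVi : V i = P i := by rw [hV, Function.update_self]
  have hμm : IsMatching q (GS T prio q) := gs_isMatching T prio q hTv hprio
  have hμV : IsStable V prio q (GS T prio q) := by
    apply isStable_of_update_pref prio q i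
      (fun j hj => by rw [hV, Function.update_of_ne hj])
      (gs_stable T prio q hTv hprio)
    · rw [hVi]
      rcases hgi : GS T prio q i with _ | s₀
      · exact lt_irrefl _
      · intro hcon
        have hmem : s₀ ∈ acceptables (T i) := gs_some_mem_acc T prio q hTv hgi
        rw [hTacc i] at hmem
        have hmem' : s₀ ∈ acceptables (P i) := List.take_subset _ _ hmem
        have h1 := (mem_acc_iff (hP i)).1 hmem'
        unfold prefLt at hcon
        omega
    · intro s hbl
      apply hnb
      rw [hμdef]
      refine ⟨s, ?_, hbl.2⟩
      have h1 := hbl.1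
      rwa [hVi] at h1
  have hsp := gs_sp V prio q hVv hprio i (truncate Q k) (truncate_valid hQ k)
  have hupd : Function.update V i (truncate Q k) = Function.update T i (truncate Q k) := by
    rw [hV, Function.update_idem]
  rw [hupd, hVi] at hsp
  have hidxle : (P i).idxOf (GS V prio q i) ≤
      (P i).idxOf (GS (Function.update T i (truncate Q k)) prio q i) := by
    unfold prefLt at hsp
    omega
  have hltP : (P i).idxOf (GS (Function.update T i (truncate Q k)) prio q i) <
      (P i).idxOf (GS T prio q i) := hlt
  have hne : GS V prio q i ≠ GS T prio q i := by
    intro he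
    rw [he] at hidxle
    omega
  have hTVi : acceptables (T i) = (acceptables (V i)).take k := by
    rw [hVi, hTacc i]
  have hTVo : ∀ j, j ≠ i → acceptables (T j) = acceptables (V j) := by
    intro j hj
    rw [hV, Function.update_of_ne hj]
  rcases Nat.lt_or_ge (traj V prio q (nRounds I S) i) k with hcase | hcase
  · have heq := tr_eq prio q hVv hTv hTVi hTVo hcase
    exact hne (congrFun heq i).symm
  · have hμnone : GS T prio q i = none := tr_none prio q hTv hTVi hTVo hcase
    have hne' : GS V prio q i ≠ none := by rw [hμnone] at hne; exact hne
    obtain ⟨s₁, hs₁⟩ := Option.ne_none_iff_exists'.1 hne'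
    exact gs_ne_none_of_stable V prio q hVv hprio hμm hμV hs₁ hμnone

end SchoolChoice
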